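/- Let A₁,…,A_n and B₁,…,B_n be d_B × d_A complex matrices such that the n² matrices {B_j* B_k : 1 ≤ j, k ≤ n} are linearly independent in M_{d_A}(ℂ). Then there exists ε* > 0 such that for every real ε with 0 < ε < ε*, the n² matrices {(A_j + ε B_j)* (A_k + ε B_k) : 1 ≤ j, k ≤ n} are linearly independent in M_{d_A}(ℂ). -/

import Mathlib

open Matrix Polynomial

noncomputable section

/-- Dual functionals for a linearly independent family. -/
lemma exists_dual_family {ι V : Type*} [DecidableEq ι]
    [AddCommGroup V] [Module ℂ V]
    {v : ι → V} (hv : LinearIndependent ℂ v) :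
    ∃ φ : ι → V →ₗ[ℂ] ℂ, ∀ a b, φ a (v b) = if a = b then 1 else 0 := by
  obtain ⟨g, hg⟩ := LinearMap.exists_leftInverse_of_injective
      (Finsupp.linearCombination ℂ v) (LinearMap.ker_eq_bot_of_injective hv)
  refine ⟨fun a => (Finsupp.lapply a) ∘ₗ g, fun a b => ?_⟩
  have : g (Finsupp.linearCombination ℂ v (Finsupp.single b 1)) = Finsupp.single b 1 := by
    have := LinearMap.congr_fun hg (Finsupp.single b 1)
    simpa using this
  simp only [LinearMap.comp_apply, Finsupp.lapply_apply]
  rw [show v b = Finsupp.linearCombination ℂ v (Finsupp.single b 1) by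
    simp [Finsupp.linearCombination_single], this]
  rw [Finsupp.single_apply]
  simp [eq_comm]

/-- If the matrix of pairings with some functionals has nonzero determinant,
the family is linearly independent. -/
lemma linearIndependent_of_det_ne_zero {ι V : Type*} [Fintype ι] [DecidableEq ι]
    [AddCommGroup V] [Module ℂ V]
    (v : ι → V) (φ : ι → V →ₗ[ℂ] ℂ)
    (h : (Matrix.of fun a b => φ a (v b)).det ≠ 0) : LinearIndependent ℂ v := by
  rw [Fintype.linearIndependent_iff]
  intro c hc
  have hmv : (Matrix.of fun a b => φ a (v b)).mulVec c = 0 := by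
    funext a
    have : φ a (∑ i, c i • v i) = 0 := by rw [hc]; simp
    simpa [Matrix.mulVec, dotProduct, map_sum, _root_.map_smul, smul_eq_mul,
      mul_comm] using this
  have := Matrix.eq_zero_of_mulVec_eq_zero h hmv
  exact fun i => congrFun this i

/-- If the `n²` matrices `B_j* B_k` are linearly independent, then for all
sufficiently small `ε > 0` the matrices `(A_j + ε B_j)* (A_k + ε B_k)` are linearly
independent. -/
theorem linearIndependent_perturbation {dA dB n : ℕ}
    (A B : Fin n → Matrix (Fin dB) (Fin dA) ℂ)
    (hB : LinearIndependent ℂ fun jk : Fin n × Fin n => (B jk.1)ᴴ * B jk.2) :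
    ∃ εstar : ℝ, 0 < εstar ∧ ∀ ε : ℝ, 0 < ε → ε < εstar →
      LinearIndependent ℂ fun jk : Fin n × Fin n =>
        (A jk.1 + (ε : ℂ) • B jk.1)ᴴ * (A jk.2 + (ε : ℂ) • B jk.2) := by
  classical
  set ι := Fin n × Fin n
  set X : ι → Matrix (Fin dA) (Fin dA) ℂ := fun b => (A b.1)ᴴ * A b.2 with hX
  set Y : ι → Matrix (Fin dA) (Fin dA) ℂ :=
    fun b => (A b.1)ᴴ * B b.2 + (B b.1)ᴴ * A b.2 with hY
  set Z : ι → Matrix (Fin dA) (Fin dA) ℂ := fun b => (B b.1)ᴴ * B b.2 with hZ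
  obtain ⟨φ, hφ⟩ := exists_dual_family hB
  -- the polynomial matrix and its determinant
  set P : Matrix ι ι (Polynomial ℂ) := Matrix.of fun a b =>
    Polynomial.C (φ a (X b)) * Polynomial.X ^ 2 + Polynomial.C (φ a (Y b)) * Polynomial.X
      + Polynomial.C (φ a (Z b)) with hP
  set q : Polynomial ℂ := P.det with hq
  have hq0 : q.eval 0 = 1 := by
    have : q.eval 0 = ((Polynomial.evalRingHom (0 : ℂ)).mapMatrix P).det :=
      RingHom.map_det (Polynomial.evalRingHom (0 : ℂ)) P
    rw [this]
    have : (Polynomial.evalRingHom (0 : ℂ)).mapMatrix P = (1 : Matrix ι ι ℂ) := by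
      ext a b
      simp only [hP, RingHom.mapMatrix_apply, Matrix.map_apply, Matrix.of_apply,
        Polynomial.coe_evalRingHom, Polynomial.eval_add, Polynomial.eval_mul,
        Polynomial.eval_pow, Polynomial.eval_C, Polynomial.eval_X, Matrix.one_apply, hφ a b]
      ring
    rw [this, Matrix.det_one]
  have hqne : q ≠ 0 := fun h => by simp [h] at hq0
  -- bound for the roots
  set T : ℕ := q.roots.toFinset.sup fun z => ⌈‖z‖⌉₊ with hT
  refine ⟨1 / (T + 1), by positivity, fun ε hε hεlt => ?_⟩
  have hεne : (ε : ℂ) ≠ 0 := by exact_mod_cast hε.ne'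
  -- q does not vanish at ε⁻¹
  have hqe : q.eval ((ε : ℂ)⁻¹) ≠ 0 := by
    intro hroot
    have hmem : ((ε : ℂ)⁻¹) ∈ q.roots := (Polynomial.mem_roots hqne).mpr hroot
    have hmem' : ((ε : ℂ)⁻¹) ∈ q.roots.toFinset := Multiset.mem_toFinset.mpr hmem
    have hle : ⌈‖((ε : ℂ)⁻¹)‖⌉₊ ≤ T :=
      Finset.le_sup (f := fun z => ⌈‖z‖⌉₊) hmem'
    have h1 : ‖((ε : ℂ)⁻¹)‖ ≤ (T : ℝ) :=
      le_trans (Nat.le_ceil _) (Nat.cast_le.mpr hle)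
    have habs : ‖((ε : ℂ)⁻¹)‖ = ε⁻¹ := by
      rw [norm_inv, Complex.norm_of_nonneg hε.le]
    have hT1 : (0 : ℝ) < (T : ℝ) + 1 := by positivity
    have hmul : ε * ((T : ℝ) + 1) < 1 := (lt_div_iff₀ hT1).mp hεlt
    have h2 : (T : ℝ) + 1 < ε⁻¹ := by
      rw [← one_div]
      exact (lt_div_iff₀ hε).mpr (by linarith)
    rw [habs] at h1
    linarith
  -- relate the matrix at ε to the polynomial evaluated at ε⁻¹
  set M : Matrix ι ι ℂ := Matrix.of fun a b =>
    φ a ((A b.1 + (ε : ℂ) • B b.1)ᴴ * (A b.2 + (ε : ℂ) • B b.2)) with hM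
  have hexp : ∀ b : ι, (A b.1 + (ε : ℂ) • B b.1)ᴴ * (A b.2 + (ε : ℂ) • B b.2)
      = X b + (ε : ℂ) • Y b + ((ε : ℂ) ^ 2) • Z b := by
    intro b
    have hstar : ((ε : ℂ) • B b.1)ᴴ = (ε : ℂ) • (B b.1)ᴴ := by
      rw [Matrix.conjTranspose_smul]
      congr 1
      simp [Complex.conj_ofReal]
    rw [Matrix.conjTranspose_add, hstar]
    simp only [hX, hY, hZ, Matrix.add_mul, Matrix.mul_add, Matrix.smul_mul,
      Matrix.mul_smul, smul_add, smul_smul]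
    rw [sq]
    abel
  have hMdet : M.det = ((ε : ℂ) ^ 2) ^ Fintype.card ι * q.eval ((ε : ℂ)⁻¹) := by
    have hMeq : M = ((ε : ℂ) ^ 2) •
        (Polynomial.evalRingHom ((ε : ℂ)⁻¹)).mapMatrix P := by
      ext a b
      simp only [hM, Matrix.of_apply, hexp b, map_add, _root_.map_smul, smul_eq_mul,
        Matrix.smul_apply, RingHom.mapMatrix_apply, Matrix.map_apply, hP,
        Polynomial.coe_evalRingHom, Polynomial.eval_add, Polynomial.eval_mul,
        Polynomial.eval_pow, Polynomial.eval_C, Polynomial.eval_X]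
      field_simp
    rw [hMeq, Matrix.det_smul]
    congr 1
    exact (RingHom.map_det (Polynomial.evalRingHom ((ε : ℂ)⁻¹)) P).symm
  have hMne : M.det ≠ 0 := by
    rw [hMdet]
    exact mul_ne_zero (pow_ne_zero _ (pow_ne_zero _ hεne)) hqe
  exact linearIndependent_of_det_ne_zero _ φ hMne
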